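/- Let X and Y be complex normed spaces, α ∈ (0,1), and f an analytic mapping on the open unit ball B(0,1) ⊆ X with values in Y which is bounded on every ball B(z,r) with 0 < r < 1 − ‖z‖. Then ‖Df(z)‖ ≤ C_f·(1 − ‖z‖)^{α−1} for all z ∈ B(0,1) if and only if ‖f(z) − f(w)‖ ≤ C'_f·‖z − w‖^α for all z, w ∈ B(0,1), with C'_f ≤ (4/α)·C_f and C_f ≤ (2/α)·C'_f. -/

import Mathlib

set_option maxHeartbeats 1000000


open Set Metric

private lemma rpow_subadd' {a b p : ℝ} (ha : 0 ≤ a) (hb : 0 ≤ b) (hp : 0 ≤ p) (hp1 : p ≤ 1) :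
    (a + b) ^ p ≤ a ^ p + b ^ p := by
  have h := NNReal.rpow_add_le_add_rpow a.toNNReal b.toNNReal hp hp1
  have h2 := NNReal.coe_le_coe.2 h
  push_cast at h2
  rwa [Real.coe_toNNReal a ha, Real.coe_toNNReal b hb] at h2

/-- Radial estimate: integrating the derivative bound along the segment from `t • z` to `z`. -/
private lemma radial_est {X Y : Type*} [NormedAddCommGroup X] [NormedSpace ℂ X]
    [NormedAddCommGroup Y] [NormedSpace ℂ Y]
    {α : ℝ} (hα : α ∈ Set.Ioo (0:ℝ) 1)
    {f : X → Y} {f' : X → X →L[ℂ] Y}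
    (hdiff : ∀ z ∈ Metric.ball (0:X) 1, HasFDerivAt f (f' z) z)
    {C : ℝ}
    (hC : ∀ z ∈ Metric.ball (0:X) 1, ‖f' z‖ ≤ C * (1 - ‖z‖) ^ (α - 1))
    {z : X} (hz : z ∈ Metric.ball (0:X) 1) {t : ℝ} (ht0 : 0 ≤ t) (ht1 : t ≤ 1) :
    ‖f z - f (t • z)‖ ≤ C / α * ((1 - t * ‖z‖) ^ α - (1 - ‖z‖) ^ α) := by
  obtain ⟨hα0, hα1⟩ := hα
  set c : ℝ := ‖z‖ with hc
  have hc0 : 0 ≤ c := norm_nonneg z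
  have hc1 : c < 1 := by simpa [hc] using mem_ball_zero_iff.1 hz
  have hmemnorm : ∀ s ∈ Set.Icc t 1, ‖s • z‖ = s * c := by
    intro s hs
    rw [norm_smul, Real.norm_eq_abs, abs_of_nonneg (ht0.trans hs.1)]
  have hsc : ∀ s ∈ Set.Icc t 1, s * c < 1 := by
    intro s hs
    calc s * c ≤ 1 * c := mul_le_mul_of_nonneg_right hs.2 hc0
    _ = c := one_mul c
    _ < 1 := hc1
  have hmem : ∀ s ∈ Set.Icc t 1, (s • z) ∈ Metric.ball (0:X) 1 := by
    intro s hs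
    rw [mem_ball_zero_iff, hmemnorm s hs]
    exact hsc s hs
  have hkey : ∀ s ∈ Set.Icc t 1, (0:ℝ) < 1 - s * c := by
    intro s hs; linarith [hsc s hs]
  -- derivative of s ↦ f (s • z)
  have hderiv : ∀ s ∈ Set.Icc t 1,
      HasDerivAt (fun s : ℝ => f (s • z) - f (t • z)) (f' (s • z) z) s := by
    intro s hs
    have h1 : HasDerivAt (fun s : ℝ => s • z) z s := by
      simpa using (hasDerivAt_id s).smul_const z
    have h2 := ((hdiff _ (hmem s hs)).restrictScalars ℝ).comp_hasDerivAt s h1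
    simpa using h2.sub_const (f (t • z))
  -- the comparison function B
  set B : ℝ → ℝ := fun s => C / α * ((1 - t * c) ^ α - (1 - s * c) ^ α) with hB
  have hBderiv : ∀ s ∈ Set.Icc t 1, HasDerivAt B (C * c * (1 - s * c) ^ (α - 1)) s := by
    intro s hs
    have h0 : (0:ℝ) < 1 - s * c := hkey s hs
    have h1 : HasDerivAt (fun s : ℝ => 1 - s * c) (-c) s := by
      simpa using ((hasDerivAt_id s).mul_const c).const_sub 1
    have h2 : HasDerivAt (fun s : ℝ => (1 - s * c) ^ α)
        (α * (1 - s * c) ^ (α - 1) * (-c)) s := by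
      exact (Real.hasDerivAt_rpow_const (p := α) (Or.inl h0.ne')).comp s h1
    have h3 := (h2.const_sub ((1 - t * c) ^ α)).const_mul (C / α)
    refine h3.congr_deriv ?_
    rw [div_mul_eq_mul_div, div_eq_iff hα0.ne']
    ring
  -- boundedness of the derivative
  have hbound : ∀ s ∈ Set.Ico t 1, ‖f' (s • z) z‖ ≤ C * c * (1 - s * c) ^ (α - 1) := by
    intro s hs
    have hs' : s ∈ Set.Icc t 1 := Ico_subset_Icc_self hs
    have h1 : ‖f' (s • z) z‖ ≤ ‖f' (s • z)‖ * c := (f' (s • z)).le_opNorm z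
    have h2 : ‖f' (s • z)‖ ≤ C * (1 - s * c) ^ (α - 1) := by
      have := hC _ (hmem s hs')
      rwa [hmemnorm s hs'] at this
    calc ‖f' (s • z) z‖ ≤ (C * (1 - s * c) ^ (α - 1)) * c :=
          h1.trans (mul_le_mul_of_nonneg_right h2 hc0)
      _ = C * c * (1 - s * c) ^ (α - 1) := by ring
  have main := image_norm_le_of_norm_deriv_right_le_deriv_boundary'
    (f := fun s : ℝ => f (s • z) - f (t • z)) (a := t) (b := 1)
    (f' := fun s : ℝ => f' (s • z) z)
    (fun s hs => (hderiv s hs).continuousAt.continuousWithinAt)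
    (fun s hs => (hderiv s (Ico_subset_Icc_self hs)).hasDerivWithinAt)
    (B := B) (B' := fun s => C * c * (1 - s * c) ^ (α - 1))
    (by simp [hB])
    (fun s hs => (hBderiv s hs).continuousAt.continuousWithinAt)
    (fun s hs => (hBderiv s (Ico_subset_Icc_self hs)).hasDerivWithinAt)
    hbound (right_mem_Icc.2 ht1)
  simpa [hB] using main

theorem hardy_littlewood_normed_spaces
    {X Y : Type*} [NormedAddCommGroup X] [NormedSpace ℂ X]
    [NormedAddCommGroup Y] [NormedSpace ℂ Y]
    (α : ℝ) (hα : α ∈ Set.Ioo (0:ℝ) 1)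
    (f : X → Y) (f' : X → X →L[ℂ] Y)
    (hdiff : ∀ z ∈ Metric.ball (0:X) 1, HasFDerivAt f (f' z) z)
    (hbd : ∀ z ∈ Metric.ball (0:X) 1, ∀ r : ℝ, 0 < r → r < 1 - ‖z‖ →
      Bornology.IsBounded (f '' Metric.ball z r)) :
    (∀ C : ℝ, 0 ≤ C →
      (∀ z ∈ Metric.ball (0:X) 1, ‖f' z‖ ≤ C * (1 - ‖z‖) ^ (α - 1)) →
      ∀ z ∈ Metric.ball (0:X) 1, ∀ w ∈ Metric.ball (0:X) 1,
        ‖f z - f w‖ ≤ (4 / α) * C * ‖z - w‖ ^ α) ∧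
    (∀ C' : ℝ, 0 ≤ C' →
      (∀ z ∈ Metric.ball (0:X) 1, ∀ w ∈ Metric.ball (0:X) 1,
        ‖f z - f w‖ ≤ C' * ‖z - w‖ ^ α) →
      ∀ z ∈ Metric.ball (0:X) 1, ‖f' z‖ ≤ (2 / α) * C' * (1 - ‖z‖) ^ (α - 1)) := by
  obtain ⟨hα0, hα1⟩ := hα
  constructor
  · -- derivative bound implies Hölder
    intro C hC0 hC z hz w hw
    rcases eq_or_ne z w with rfl | hzw
    · simp [Real.zero_rpow hα0.ne']
    obtain ⟨δ, hδdef⟩ : ∃ x : ℝ, x = ‖z - w‖ := ⟨_, rfl⟩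
    rw [← hδdef]
    have hδ0 : 0 < δ := by
      rw [hδdef, norm_pos_iff]
      exact sub_ne_zero.2 hzw
    obtain ⟨δ', hδ'def⟩ : ∃ x : ℝ, x = min δ 1 := ⟨_, rfl⟩
    have hδ'0 : 0 < δ' := by rw [hδ'def]; exact lt_min hδ0 one_pos
    have hδ'1 : δ' ≤ 1 := by rw [hδ'def]; exact min_le_right _ _
    have hδ'δ : δ' ≤ δ := by rw [hδ'def]; exact min_le_left _ _
    obtain ⟨t, htdef⟩ : ∃ x : ℝ, x = 1 - δ' := ⟨_, rfl⟩
    have ht0 : 0 ≤ t := by rw [htdef]; linarith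
    have ht1 : t ≤ 1 := by rw [htdef]; linarith
    have hδα : (0:ℝ) ≤ δ ^ α := Real.rpow_nonneg hδ0.le _
    have hzn : ‖z‖ < 1 := by simpa using mem_ball_zero_iff.1 hz
    have hwn : ‖w‖ < 1 := by simpa using mem_ball_zero_iff.1 hw
    -- radial estimates
    have hrad : ∀ u : X, u ∈ Metric.ball (0:X) 1 →
        ‖f u - f (t • u)‖ ≤ C / α * δ ^ α := by
      intro u hu
      have h1 := radial_est ⟨hα0, hα1⟩ hdiff hC hu ht0 ht1
      have hun : ‖u‖ < 1 := by simpa using mem_ball_zero_iff.1 hu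
      have hun0 : 0 ≤ ‖u‖ := norm_nonneg u
      have key : (1 - t * ‖u‖) ^ α - (1 - ‖u‖) ^ α ≤ δ ^ α := by
        have e1 : 1 - t * ‖u‖ = (1 - ‖u‖) + δ' * ‖u‖ := by rw [htdef]; ring
        have e2 : ((1 - ‖u‖) + δ' * ‖u‖) ^ α ≤ (1 - ‖u‖) ^ α + (δ' * ‖u‖) ^ α :=
          rpow_subadd' (by linarith) (by positivity) hα0.le hα1.le
        have e3 : (δ' * ‖u‖) ^ α ≤ δ ^ α := by
          apply Real.rpow_le_rpow (by positivity) _ hα0.le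
          calc δ' * ‖u‖ ≤ δ' * 1 := mul_le_mul_of_nonneg_left hun.le hδ'0.le
          _ = δ' := mul_one _
          _ ≤ δ := hδ'δ
        rw [e1]; linarith
      calc ‖f u - f (t • u)‖ ≤ C / α * ((1 - t * ‖u‖) ^ α - (1 - ‖u‖) ^ α) := h1
        _ ≤ C / α * δ ^ α := by
            apply mul_le_mul_of_nonneg_left key (by positivity)
    -- middle segment estimate
    have hmid : ‖f (t • z) - f (t • w)‖ ≤ 2 * C * δ ^ α := by
      rcases le_or_gt δ 1 with hcase | hcase
      · -- δ ≤ 1, so δ' = δ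
        have hδ'eq : δ' = δ := by rw [hδ'def]; exact min_eq_left hcase
        obtain ⟨M, hM⟩ : ∃ x : ℝ, x = max ‖z‖ ‖w‖ := ⟨_, rfl⟩
        have hM0 : 0 ≤ M := by rw [hM]; exact le_max_iff.2 (Or.inl (norm_nonneg z))
        have hM1 : M < 1 := by rw [hM]; exact max_lt hzn hwn
        -- all points of the segment satisfy 1 - ‖u‖ ≥ δ'/2
        have hseg : ∀ u ∈ segment ℝ (t • w) (t • z), ‖u‖ ≤ t * M := by
          intro u hu
          obtain ⟨a, b, ha, hb, hab, rfl⟩ := hu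
          have hwM : ‖w‖ ≤ M := by rw [hM]; exact le_max_right _ _
          have hzM : ‖z‖ ≤ M := by rw [hM]; exact le_max_left _ _
          have h1 : ‖a • (t • w) + b • (t • z)‖ ≤ a * (t * M) + b * (t * M) := by
            refine (norm_add_le _ _).trans ?_
            gcongr
            · rw [norm_smul, Real.norm_eq_abs, abs_of_nonneg ha, norm_smul,
                Real.norm_eq_abs, abs_of_nonneg ht0]
              gcongr
            · rw [norm_smul, Real.norm_eq_abs, abs_of_nonneg hb, norm_smul,
                Real.norm_eq_abs, abs_of_nonneg ht0]
              gcongr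
          calc ‖a • (t • w) + b • (t • z)‖ ≤ a * (t * M) + b * (t * M) := h1
            _ = (a + b) * (t * M) := by ring
            _ = t * M := by rw [hab, one_mul]
        have hhalf : δ' / 2 ≤ 1 - t * M := by
          rcases le_or_gt (1/2 : ℝ) M with hM2 | hM2
          · have : δ' * M ≤ 1 - t * M := by rw [htdef]; nlinarith
            nlinarith
          · have : 1 - t * M ≥ 1 - M := by nlinarith
            nlinarith
        have hbound : ∀ u ∈ segment ℝ (t • w) (t • z),
            ‖f' u‖ ≤ C * (δ' / 2) ^ (α - 1) := by
          intro u hu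
          have hun : ‖u‖ ≤ t * M := hseg u hu
          have humem : u ∈ Metric.ball (0:X) 1 := by
            rw [mem_ball_zero_iff]
            have h3 : t * M ≤ M := by nlinarith
            linarith
          refine (hC u humem).trans ?_
          have hp1 : (0:ℝ) < δ' / 2 := by linarith
          have hp2 : δ' / 2 ≤ 1 - ‖u‖ := by linarith
          have h2 : (1 - ‖u‖) ^ (α - 1) ≤ (δ' / 2) ^ (α - 1) :=
            Real.rpow_le_rpow_of_nonpos hp1 hp2 (by linarith)
          exact mul_le_mul_of_nonneg_left h2 hC0
        have hsub : segment ℝ (t • w) (t • z) ⊆ Metric.ball (0:X) 1 := by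
          intro u hu
          rw [mem_ball_zero_iff]
          have h3 : t * M ≤ M := by nlinarith
          linarith [hseg u hu]
        have hmvt := Convex.norm_image_sub_le_of_norm_hasFDerivWithin_le
          (𝕜 := ℂ) (f := f) (f' := f') (s := segment ℝ (t • w) (t • z))
          (fun u hu => (hdiff u (hsub hu)).hasFDerivWithinAt)
          hbound (convex_segment _ _)
          (left_mem_segment ℝ _ _) (right_mem_segment ℝ _ _)
        have hdist : ‖t • z - t • w‖ = t * δ := by
          rw [← smul_sub, norm_smul, Real.norm_eq_abs, abs_of_nonneg ht0, hδdef]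
        have hA : (0:ℝ) ≤ δ ^ (α - 1) := Real.rpow_nonneg hδ0.le _
        have hfin : C * (δ' / 2) ^ (α - 1) * (t * δ) ≤ 2 * C * δ ^ α := by
          have e1 : (δ' / 2) ^ (α - 1) = (δ / 2) ^ (α - 1) := by rw [hδ'eq]
          have e2 : (δ / 2) ^ (α - 1) ≤ 2 * δ ^ (α - 1) := by
            rw [Real.div_rpow hδ0.le (by norm_num : (0:ℝ) ≤ 2)]
            rw [div_le_iff₀ (by positivity)]
            have h21 : (1:ℝ)/2 ≤ (2:ℝ) ^ (α - 1) := by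
              have h22 := Real.rpow_le_rpow_of_exponent_le (by norm_num : (1:ℝ) ≤ 2)
                (by linarith : (-1:ℝ) ≤ α - 1)
              rwa [Real.rpow_neg_one, show ((2:ℝ))⁻¹ = 1/2 by norm_num] at h22
            nlinarith
          have e3 : δ ^ (α - 1) * δ = δ ^ α := by
            rw [← Real.rpow_add_one hδ0.ne' (α - 1)]
            norm_num
          have e4 : t * δ ≤ δ := by nlinarith
          have h1 : (0:ℝ) ≤ (δ/2) ^ (α-1) := Real.rpow_nonneg (by positivity) _
          calc C * (δ' / 2) ^ (α - 1) * (t * δ)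
              = C * (δ / 2) ^ (α - 1) * (t * δ) := by rw [e1]
            _ ≤ C * (δ / 2) ^ (α - 1) * δ :=
                mul_le_mul_of_nonneg_left e4 (mul_nonneg hC0 h1)
            _ ≤ C * (2 * δ ^ (α - 1)) * δ := by
                have h5 : C * (δ / 2) ^ (α - 1) ≤ C * (2 * δ ^ (α - 1)) :=
                  mul_le_mul_of_nonneg_left e2 hC0
                exact mul_le_mul_of_nonneg_right h5 hδ0.le
            _ = 2 * C * (δ ^ (α - 1) * δ) := by ring
            _ = 2 * C * δ ^ α := by rw [e3]
        calc ‖f (t • z) - f (t • w)‖ ≤ C * (δ' / 2) ^ (α - 1) * ‖t • z - t • w‖ := hmvt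
          _ = C * (δ' / 2) ^ (α - 1) * (t * δ) := by rw [hdist]
          _ ≤ 2 * C * δ ^ α := hfin
      · -- δ > 1, so δ' = 1 and t = 0
        have hδ'eq : δ' = 1 := by rw [hδ'def]; exact min_eq_right hcase.le
        have ht : t = 0 := by rw [htdef, hδ'eq]; ring
        rw [ht, zero_smul, zero_smul, sub_self, norm_zero]
        positivity
    -- combine
    have htri : ‖f z - f w‖ ≤ ‖f z - f (t • z)‖ + ‖f (t • z) - f (t • w)‖
        + ‖f (t • w) - f w‖ := by
      have h1 := norm_sub_le_norm_sub_add_norm_sub (f z) (f (t • w)) (f w)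
      have h2 := norm_sub_le_norm_sub_add_norm_sub (f z) (f (t • z)) (f (t • w))
      linarith
    have hradz := hrad z hz
    have hradw := hrad w hw
    rw [norm_sub_rev (f (t • w)) (f w)] at htri
    have hsum : C / α * δ ^ α + 2 * C * δ ^ α + C / α * δ ^ α ≤ 4 / α * C * δ ^ α := by
      have h0 : C ≤ C / α := (le_div_iff₀ hα0).2 (by nlinarith)
      have h1 : 2 * C ≤ 2 * (C / α) := by linarith
      have e : 4 / α * C * δ ^ α = C / α * δ ^ α + 2 * (C / α) * δ ^ α + C / α * δ ^ α := by
        field_simp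
        ring
      rw [e]
      have h2 := mul_le_mul_of_nonneg_right h1 hδα
      linarith
    calc ‖f z - f w‖ ≤ ‖f z - f (t • z)‖ + ‖f (t • z) - f (t • w)‖ + ‖f w - f (t • w)‖ :=
          htri
      _ ≤ C / α * δ ^ α + 2 * C * δ ^ α + C / α * δ ^ α := by
          gcongr
      _ ≤ 4 / α * C * δ ^ α := hsum
  · -- Hölder implies derivative bound, via the Schwarz lemma
    intro C' hC'0 hH z hz
    have hzn : ‖z‖ < 1 := by simpa using mem_ball_zero_iff.1 hz
    obtain ⟨r, hr⟩ : ∃ x : ℝ, x = 1 - ‖z‖ := ⟨_, rfl⟩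
    rw [← hr]
    have hr0 : 0 < r := by rw [hr]; linarith
    have hrp : 0 < r ^ (α - 1) := Real.rpow_pos_of_pos hr0 _
    have key : ‖f' z‖ ≤ C' * r ^ (α - 1) := by
      refine le_of_forall_pos_le_add (fun ε hε => ?_)
      obtain ⟨ε', hε'⟩ : ∃ x : ℝ, x = ε / r ^ (α - 1) := ⟨_, rfl⟩
      have hε'0 : 0 < ε' := by rw [hε']; exact div_pos hε hrp
      have main : ‖f' z‖ ≤ (C' + ε') * r ^ (α - 1) := by
        refine ContinuousLinearMap.opNorm_le_bound _ (by positivity) (fun h => ?_)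
        rcases eq_or_ne h 0 with rfl | hh
        · simp
        have hh0 : 0 < ‖h‖ := norm_pos_iff.2 hh
        obtain ⟨R₁, hR₁⟩ : ∃ x : ℝ, x = r / ‖h‖ := ⟨_, rfl⟩
        have hR₁0 : 0 < R₁ := by rw [hR₁]; exact div_pos hr0 hh0
        obtain ⟨R₂, hR₂⟩ : ∃ x : ℝ, x = (C' + ε') * r ^ α := ⟨_, rfl⟩
        set g : ℂ → Y := fun ζ => f (z + ζ • h) with hg
        have hmem : ∀ ζ : ℂ, ζ ∈ Metric.ball (0:ℂ) R₁ →
            z + ζ • h ∈ Metric.ball (0:X) 1 := by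
          intro ζ hζ
          rw [mem_ball_zero_iff] at hζ
          rw [mem_ball_zero_iff]
          calc ‖z + ζ • h‖ ≤ ‖z‖ + ‖ζ • h‖ := norm_add_le _ _
            _ = ‖z‖ + ‖ζ‖ * ‖h‖ := by rw [norm_smul]
            _ < ‖z‖ + R₁ * ‖h‖ := by
                have h5 : ‖ζ‖ * ‖h‖ < R₁ * ‖h‖ := by gcongr
                linarith
            _ = 1 := by rw [hR₁, div_mul_cancel₀ _ hh0.ne', hr]; ring
        have hgderiv : ∀ ζ ∈ Metric.ball (0:ℂ) R₁,
            HasDerivAt g (f' (z + ζ • h) h) ζ := by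
          intro ζ hζ
          have h1 : HasDerivAt (fun ζ : ℂ => z + ζ • h) h ζ := by
            simpa using ((hasDerivAt_id ζ).smul_const h).const_add z
          exact (hdiff _ (hmem ζ hζ)).comp_hasDerivAt ζ h1
        have hd : DifferentiableOn ℂ g (Metric.ball (0:ℂ) R₁) := fun ζ hζ =>
          (hgderiv ζ hζ).differentiableAt.differentiableWithinAt
        have hg0 : g 0 = f z := by simp [hg]
        have hmaps : Set.MapsTo g (Metric.ball (0:ℂ) R₁) (Metric.ball (g 0) R₂) := by
          intro ζ hζ
          rw [mem_ball, dist_eq_norm, hg0]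
          have hζ' : ‖ζ‖ < R₁ := by simpa using mem_ball_zero_iff.1 hζ
          have h1 : ‖g ζ - f z‖ ≤ C' * ‖(z + ζ • h) - z‖ ^ α :=
            hH _ (hmem ζ hζ) z hz
          have h2 : ‖(z + ζ • h) - z‖ = ‖ζ‖ * ‖h‖ := by
            rw [add_sub_cancel_left, norm_smul]
          have h3 : ‖ζ‖ * ‖h‖ ≤ r := by
            rw [hR₁] at hζ'
            rw [← div_mul_cancel₀ r hh0.ne']
            gcongr
          have h4 : (‖ζ‖ * ‖h‖) ^ α ≤ r ^ α := Real.rpow_le_rpow (by positivity) h3 hα0.le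
          have h5 : 0 < r ^ α := Real.rpow_pos_of_pos hr0 _
          calc ‖g ζ - f z‖ ≤ C' * (‖ζ‖ * ‖h‖) ^ α := by rwa [h2] at h1
            _ ≤ C' * r ^ α := mul_le_mul_of_nonneg_left h4 hC'0
            _ < R₂ := by rw [hR₂]; nlinarith
        have hschwarz := Complex.norm_dslope_le_div_of_mapsTo_ball hd (hmaps.mono_right ball_subset_closedBall)
          (mem_ball_self hR₁0)
        rw [dslope_same] at hschwarz
        have hderiv0 : deriv g 0 = f' z h := by
          have h6 := hgderiv 0 (mem_ball_self hR₁0)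
          simpa using h6.deriv
        rw [hderiv0] at hschwarz
        calc ‖f' z h‖ ≤ R₂ / R₁ := hschwarz
          _ = (C' + ε') * r ^ (α - 1) * ‖h‖ := by
              rw [hR₂, hR₁, Real.rpow_sub_one hr0.ne']
              field_simp
      calc ‖f' z‖ ≤ (C' + ε') * r ^ (α - 1) := main
        _ = C' * r ^ (α - 1) + ε' * r ^ (α - 1) := by ring
        _ = C' * r ^ (α - 1) + ε := by
            rw [hε', div_mul_cancel₀ _ hrp.ne']
    have h2 : (1:ℝ) ≤ 2 / α := by
      rw [le_div_iff₀ hα0]; linarith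
    have h3 : C' * r ^ (α - 1) ≤ 2 / α * C' * r ^ (α - 1) := by
      have h4 : 1 * C' ≤ 2 / α * C' := mul_le_mul_of_nonneg_right h2 hC'0
      nlinarith
    linarith [key]
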